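/- arXiv:1601.00910 — 2 statements merged into one kernel-verified Lean document; each statement's English description precedes it below -/
import Mathlib

section
/- Let α, β, τ > 0 and ξ⁰ with 0 < (β/α)ξ⁰ < 1. Consider the integral equation (coming from setting θ = 0): 1 - 2S(t) = (β/α)ξ⁰e^{-t/τ} + (1/τ)∫₀ᵗ e^{(ς-t)/τ}(1 - S(ς))dς. Then S(t) = (e^{-t/(2τ)}/2)(1 - (β/α)ξ⁰) solves this equation for all t ≥ 0. -/
theorem stmt_15 (α β τ ξ0 : ℝ) (hα : 0 < α) (hβ : 0 < β) (hτ : 0 < τ)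
    (hr : 0 < (β / α) * ξ0 ∧ (β / α) * ξ0 < 1)
    (S : ℝ → ℝ)
    (hS : ∀ t, S t = (Real.exp (-t / (2 * τ)) / 2) * (1 - (β / α) * ξ0)) :
    ∀ t, 0 ≤ t →
      1 - 2 * S t = (β / α) * ξ0 * Real.exp (-t / τ) +
        (1 / τ) * ∫ ς in (0:ℝ)..t, Real.exp ((ς - t) / τ) * (1 - S ς) := by
  intro t ht
  have hτ' : τ ≠ 0 := hτ.ne'
  set c : ℝ := (β / α) * ξ0 with hc
  have key : (∫ ς in (0:ℝ)..t, Real.exp ((ς - t) / τ) * (1 - S ς)) =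
      (τ * Real.exp ((t - t) / τ) - (1 - c) * τ * Real.exp (t / (2 * τ) - t / τ))
      - (τ * Real.exp ((0 - t) / τ) - (1 - c) * τ * Real.exp (0 / (2 * τ) - t / τ)) := by
    apply intervalIntegral.integral_eq_sub_of_hasDerivAt
      (f := fun x : ℝ => τ * Real.exp ((x - t) / τ) - (1 - c) * τ * Real.exp (x / (2 * τ) - t / τ))
    · intro ς hς
      have h1 : HasDerivAt (fun x : ℝ => τ * Real.exp ((x - t) / τ))
          (Real.exp ((ς - t) / τ)) ς := by
        have := ((((hasDerivAt_id ς).sub_const t).div_const τ).exp).const_mul τ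
        refine this.congr_deriv ?_
        simp only [id]
        field_simp
      have h2 : HasDerivAt (fun x : ℝ => (1 - c) * τ * Real.exp (x / (2 * τ) - t / τ))
          ((1 - c) / 2 * Real.exp (ς / (2 * τ) - t / τ)) ς := by
        have := ((((hasDerivAt_id ς).div_const (2 * τ)).sub_const (t / τ)).exp).const_mul
          ((1 - c) * τ)
        refine this.congr_deriv ?_
        simp only [id]
        field_simp
      have h3 := h1.sub h2
      refine h3.congr_deriv ?_
      rw [hS ς]
      have hexp : Real.exp ((ς - t) / τ) * Real.exp (-ς / (2 * τ)) =
          Real.exp (ς / (2 * τ) - t / τ) := by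
        rw [← Real.exp_add]
        congr 1
        field_simp
        ring
      rw [← hexp]
      ring
    · apply Continuous.intervalIntegrable
      have : Continuous S := by
        have : S = fun x => (Real.exp (-x / (2 * τ)) / 2) * (1 - c) := funext hS
        rw [this]
        continuity
      continuity
  rw [key, hS t]
  have e1 : (t - t) / τ = 0 := by simp
  have e2 : (0 - t) / τ = -t / τ := by ring
  have e3 : t / (2 * τ) - t / τ = -t / (2 * τ) := by field_simp; ring
  have e4 : (0:ℝ) / (2 * τ) - t / τ = -t / τ := by ring
  rw [e1, e2, e3, e4, Real.exp_zero]
  field_simp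
  ring
end

section
/- Let α, β, τ > 0 and ξ⁰ with 0 < (β/α)ξ⁰ < 1. Consider the integral equation (coming from setting θ = 1): 2(1 - S(t)) = (β/α)ξ⁰e^{-t/τ} + (1/τ)∫₀ᵗ e^{(ς-t)/τ}(1 - S(ς))dς. Then S(t) = 1 - (β/(2α))ξ⁰e^{-t/(2τ)} solves this equation for all t ≥ 0. -/
theorem stmt_16 (α β τ ξ0 : ℝ) (hα : 0 < α) (hβ : 0 < β) (hτ : 0 < τ)
    (hr : 0 < (β / α) * ξ0 ∧ (β / α) * ξ0 < 1)
    (S : ℝ → ℝ)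
    (hS : ∀ t, S t = 1 - (β / (2 * α)) * ξ0 * Real.exp (-t / (2 * τ))) :
    ∀ t, 0 ≤ t →
      2 * (1 - S t) = (β / α) * ξ0 * Real.exp (-t / τ) +
        (1 / τ) * ∫ ς in (0:ℝ)..t, Real.exp ((ς - t) / τ) * (1 - S ς) := by
  intro t ht
  have hτ' : τ ≠ 0 := ne_of_gt hτ
  have hc : (1 / (2 * τ)) ≠ 0 := by positivity
  set C := (β / (2 * α)) * ξ0 with hC
  have hint : (∫ ς in (0:ℝ)..t, Real.exp ((ς - t) / τ) * (1 - S ς))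
      = C * Real.exp (-t / τ) * ((1 / (2 * τ))⁻¹ *
          (Real.exp (t * (1 / (2 * τ))) - Real.exp (0 * (1 / (2 * τ))))) := by
    have : ∀ ς : ℝ, Real.exp ((ς - t) / τ) * (1 - S ς)
        = C * Real.exp (-t / τ) * Real.exp (ς * (1 / (2 * τ))) := by
      intro ς
      rw [hS ς, sub_sub_cancel]
      calc Real.exp ((ς - t) / τ) * (C * Real.exp (-ς / (2 * τ)))
          = C * Real.exp ((ς - t) / τ + -ς / (2 * τ)) := by rw [Real.exp_add]; ring
        _ = C * Real.exp (-t / τ + ς * (1 / (2 * τ))) := by congr 1; field_simp; ring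
        _ = C * Real.exp (-t / τ) * Real.exp (ς * (1 / (2 * τ))) := by
            rw [Real.exp_add]; ring
    simp only [this]
    rw [intervalIntegral.integral_const_mul,
      intervalIntegral.integral_comp_mul_right (fun x => Real.exp x) hc,
      integral_exp, smul_eq_mul]
  rw [hint, hS t]
  have he : Real.exp (t * (1 / (2 * τ))) * Real.exp (-t / τ) = Real.exp (-t / (2 * τ)) := by
    rw [← Real.exp_add]
    congr 1
    field_simp
    ring
  have hba : β / α * ξ0 = 2 * C := by rw [hC]; field_simp
  simp only [zero_mul, Real.exp_zero]
  rw [hC, show t * (1 / (2 * τ)) = t / (2 * τ) from by ring, ← he,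
    show t * (1 / (2 * τ)) = t / (2 * τ) from by ring]
  field_simp
  ring
end
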